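/- Let X be any element of the even subalgebra of Cl₄ (i.e. X lies in the even part of the ℤ/2-grading of Cl₄). Then X·reverse(X) = reverse(X)·X, and for every element Y of the even subalgebra of Cl₄ one has (X·reverse(X))·Y = Y·(X·reverse(X)). -/
import Mathlib


open CliffordAlgebra

set_option maxHeartbeats 1000000

/-- The positive-definite quadratic form `Q₄(v) = v₀² + v₁² + v₂² + v₃²` on `ℝ⁴`. -/
noncomputable def Q4 : QuadraticForm ℝ (Fin 4 → ℝ) :=
  QuadraticMap.weightedSumSquares ℝ (fun _ : Fin 4 => (1 : ℝ))

/-- The generators `e i` of the Clifford algebra `Cl₄ = Cl_{4,0}`. -/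
noncomputable def e (i : Fin 4) : CliffordAlgebra Q4 :=
  CliffordAlgebra.ι Q4 (Pi.single i 1)

lemma Q4_single (i : Fin 4) : Q4 (Pi.single i 1) = 1 := by
  simp [Q4, Pi.single_apply]

lemma polar_single (i j : Fin 4) (h : i ≠ j) :
    QuadraticMap.polar Q4 (Pi.single i 1) (Pi.single j 1) = 0 := by
  simp only [QuadraticMap.polar, Q4, QuadraticMap.weightedSumSquares_apply, Pi.add_apply,
    Pi.single_apply, smul_eq_mul, one_mul]
  rw [← Finset.sum_sub_distrib, ← Finset.sum_sub_distrib]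
  apply Finset.sum_eq_zero
  intro k _
  by_cases hk : k = i <;> by_cases hk' : k = j <;> simp_all

@[simp] lemma e_sq (i : Fin 4) : e i * e i = 1 := by
  rw [e, ι_sq_scalar, Q4_single, map_one]

@[simp] lemma e_sq' (i : Fin 4) (x : CliffordAlgebra Q4) : e i * (e i * x) = x := by
  rw [← mul_assoc, e_sq, one_mul]

lemma e_swap {i j : Fin 4} (h : i ≠ j) : e j * e i = -(e i * e j) := by
  have := ι_mul_ι_add_swap (Q := Q4) (Pi.single i 1) (Pi.single j 1)
  rw [polar_single i j h, map_zero] at this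
  rw [← e, ← e] at this
  linear_combination (norm := noncomm_ring) this

lemma e_swap' {i j : Fin 4} (h : i ≠ j) (x : CliffordAlgebra Q4) :
    e j * (e i * x) = -(e i * (e j * x)) := by
  rw [← mul_assoc, e_swap h, neg_mul, mul_assoc]

@[simp] lemma e10 : e 1 * e 0 = -(e 0 * e 1) := e_swap (by decide)
@[simp] lemma e20 : e 2 * e 0 = -(e 0 * e 2) := e_swap (by decide)
@[simp] lemma e21 : e 2 * e 1 = -(e 1 * e 2) := e_swap (by decide)
@[simp] lemma e30 : e 3 * e 0 = -(e 0 * e 3) := e_swap (by decide)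
@[simp] lemma e31 : e 3 * e 1 = -(e 1 * e 3) := e_swap (by decide)
@[simp] lemma e32 : e 3 * e 2 = -(e 2 * e 3) := e_swap (by decide)
@[simp] lemma e10' (x) : e 1 * (e 0 * x) = -(e 0 * (e 1 * x)) := e_swap' (by decide) x
@[simp] lemma e20' (x) : e 2 * (e 0 * x) = -(e 0 * (e 2 * x)) := e_swap' (by decide) x
@[simp] lemma e21' (x) : e 2 * (e 1 * x) = -(e 1 * (e 2 * x)) := e_swap' (by decide) x
@[simp] lemma e30' (x) : e 3 * (e 0 * x) = -(e 0 * (e 3 * x)) := e_swap' (by decide) x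
@[simp] lemma e31' (x) : e 3 * (e 1 * x) = -(e 1 * (e 3 * x)) := e_swap' (by decide) x
@[simp] lemma e32' (x) : e 3 * (e 2 * x) = -(e 2 * (e 3 * x)) := e_swap' (by decide) x

@[simp] lemma reverse_e (i : Fin 4) : reverse (e i) = e i := reverse_ι _

noncomputable def u : Fin 8 → CliffordAlgebra Q4
  | 0 => 1
  | 1 => e 0 * e 1
  | 2 => e 0 * e 2
  | 3 => e 1 * e 2
  | 4 => e 0 * e 3
  | 5 => e 1 * e 3
  | 6 => e 2 * e 3
  | 7 => e 0 * (e 1 * (e 2 * e 3))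

lemma u0 : u 0 = 1 := rfl
lemma u1 : u 1 = e 0 * e 1 := rfl
lemma u2 : u 2 = e 0 * e 2 := rfl
lemma u3 : u 3 = e 1 * e 2 := rfl
lemma u4 : u 4 = e 0 * e 3 := rfl
lemma u5 : u 5 = e 1 * e 3 := rfl
lemma u6 : u 6 = e 2 * e 3 := rfl
lemma u7 : u 7 = e 0 * (e 1 * (e 2 * e 3)) := rfl

noncomputable abbrev S : Submodule ℝ (CliffordAlgebra Q4) :=
  Submodule.span ℝ (Set.range u)

lemma hu (k : Fin 8) : u k ∈ S := Submodule.subset_span ⟨k, rfl⟩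

lemma table (i j : Fin 4) (k : Fin 8) : e i * (e j * u k) ∈ S := by
  have h0 : (1 : CliffordAlgebra Q4) ∈ S := hu 0
  have h1 : e 0 * e 1 ∈ S := hu 1
  have h2 : e 0 * e 2 ∈ S := hu 2
  have h3 : e 1 * e 2 ∈ S := hu 3
  have h4 : e 0 * e 3 ∈ S := hu 4
  have h5 : e 1 * e 3 ∈ S := hu 5
  have h6 : e 2 * e 3 ∈ S := hu 6
  have h7 : e 0 * (e 1 * (e 2 * e 3)) ∈ S := hu 7
  fin_cases i <;> fin_cases j <;> fin_cases k <;>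
    simp only [show ((⟨0, by omega⟩ : Fin 4)) = 0 from rfl,
      show ((⟨1, by omega⟩ : Fin 4)) = 1 from rfl,
      show ((⟨2, by omega⟩ : Fin 4)) = 2 from rfl,
      show ((⟨3, by omega⟩ : Fin 4)) = 3 from rfl,
      show ((⟨0, by omega⟩ : Fin 8)) = 0 from rfl,
      show ((⟨1, by omega⟩ : Fin 8)) = 1 from rfl,
      show ((⟨2, by omega⟩ : Fin 8)) = 2 from rfl,
      show ((⟨3, by omega⟩ : Fin 8)) = 3 from rfl,
      show ((⟨4, by omega⟩ : Fin 8)) = 4 from rfl,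
      show ((⟨5, by omega⟩ : Fin 8)) = 5 from rfl,
      show ((⟨6, by omega⟩ : Fin 8)) = 6 from rfl,
      show ((⟨7, by omega⟩ : Fin 8)) = 7 from rfl,
      u0, u1, u2, u3, u4, u5, u6, u7,
      mul_one, one_mul, mul_neg, neg_neg, mul_assoc,
      e_sq, e_sq', e10, e20, e21, e30, e31, e32, e10', e20', e21', e30', e31', e32'] <;>
    first
      | exact h0 | exact h1 | exact h2 | exact h3 | exact h4 | exact h5 | exact h6 | exact h7
      | exact Submodule.neg_mem _ h0 | exact Submodule.neg_mem _ h1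
      | exact Submodule.neg_mem _ h2 | exact Submodule.neg_mem _ h3
      | exact Submodule.neg_mem _ h4 | exact Submodule.neg_mem _ h5
      | exact Submodule.neg_mem _ h6 | exact Submodule.neg_mem _ h7

lemma mulmem (i j : Fin 4) {x : CliffordAlgebra Q4} (hx : x ∈ S) : e i * (e j * x) ∈ S := by
  induction hx using Submodule.span_induction with
  | mem y hy => obtain ⟨k, rfl⟩ := hy; exact table i j k
  | zero => simp only [mul_zero]; exact Submodule.zero_mem _
  | add y z _ _ hy hz => simp only [mul_add]; exact Submodule.add_mem _ hy hz
  | smul r y _ hy => simp only [mul_smul_comm]; exact Submodule.smul_mem _ _ hy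

lemma ι_expand (m : Fin 4 → ℝ) : ι Q4 m = ∑ i, m i • e i := by
  conv_lhs => rw [← Finset.univ_sum_single m]
  rw [map_sum]
  congr 1
  ext i
  rw [e, ← map_smul]
  congr 1
  ext j
  simp [Pi.single_apply]

lemma even_le_span : evenOdd Q4 0 ≤ S := by
  intro x hx
  induction x, hx using even_induction with
  | algebraMap r =>
    rw [Algebra.algebraMap_eq_smul_one]
    exact Submodule.smul_mem _ _ (hu 0)
  | add x y hx hy ihx ihy => exact Submodule.add_mem _ ihx ihy
  | ι_mul_ι_mul m₁ m₂ x hx ih =>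
    rw [ι_expand, ι_expand, Finset.sum_mul_sum]
    rw [Finset.sum_mul]
    refine Submodule.sum_mem _ fun i _ => ?_
    rw [Finset.sum_mul]
    refine Submodule.sum_mem _ fun j _ => ?_
    simp only [smul_mul_assoc, mul_smul_comm, mul_assoc]
    exact Submodule.smul_mem _ _ (Submodule.smul_mem _ _ (mulmem i j ih))

lemma key (c : Fin 8 → ℝ) :
    (∑ i, c i • u i) * reverse (∑ i, c i • u i) =
      (c 0 ^ 2 + c 1 ^ 2 + c 2 ^ 2 + c 3 ^ 2 + c 4 ^ 2 + c 5 ^ 2 + c 6 ^ 2 + c 7 ^ 2) •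
          (1 : CliffordAlgebra Q4)
        + (2 * (c 0 * c 7 - c 1 * c 6 + c 2 * c 5 - c 3 * c 4)) •
          (e 0 * (e 1 * (e 2 * e 3))) := by
  simp only [Fin.sum_univ_eight, u0, u1, u2, u3, u4, u5, u6, u7, map_add, map_smul,
    reverse.map_mul, reverse.map_one, reverse_e]
  simp only [mul_add, add_mul, smul_mul_assoc, mul_smul_comm, smul_smul, mul_one, one_mul,
    mul_neg, neg_mul, smul_neg, neg_neg, mul_assoc, e_sq, e_sq', e10, e20, e21, e30, e31, e32,
    e10', e20', e21', e30', e31', e32']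
  module

lemma key' (c : Fin 8 → ℝ) :
    reverse (∑ i, c i • u i) * (∑ i, c i • u i) =
      (c 0 ^ 2 + c 1 ^ 2 + c 2 ^ 2 + c 3 ^ 2 + c 4 ^ 2 + c 5 ^ 2 + c 6 ^ 2 + c 7 ^ 2) •
          (1 : CliffordAlgebra Q4)
        + (2 * (c 0 * c 7 - c 1 * c 6 + c 2 * c 5 - c 3 * c 4)) •
          (e 0 * (e 1 * (e 2 * e 3))) := by
  simp only [Fin.sum_univ_eight, u0, u1, u2, u3, u4, u5, u6, u7, map_add, map_smul,
    reverse.map_mul, reverse.map_one, reverse_e]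
  simp only [mul_add, add_mul, smul_mul_assoc, mul_smul_comm, smul_smul, mul_one, one_mul,
    mul_neg, neg_mul, smul_neg, neg_neg, mul_assoc, e_sq, e_sq', e10, e20, e21, e30, e31, e32,
    e10', e20', e21', e30', e31', e32']
  module

/-- For `X` in the even subalgebra of `Cl₄`, `X·X†` is central in the even subalgebra:
`X·X† = X†·X` and `(X·X†)·Y = Y·(X·X†)` for all even `Y`. -/
theorem mul_reverse_comm_of_even
    (X : CliffordAlgebra Q4) (hX : X ∈ CliffordAlgebra.evenOdd Q4 0) :
    X * reverse X = reverse X * X ∧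
      ∀ Y ∈ CliffordAlgebra.evenOdd Q4 0,
        (X * reverse X) * Y = Y * (X * reverse X) := by

  obtain ⟨c, hc⟩ := (Submodule.mem_span_range_iff_exists_fun ℝ).mp (even_le_span hX)
  subst hc
  refine ⟨by rw [key, key'], fun Y hY => ?_⟩
  obtain ⟨d, hd⟩ := (Submodule.mem_span_range_iff_exists_fun ℝ).mp (even_le_span hY)
  subst hd
  rw [key]
  simp only [Fin.sum_univ_eight, u0, u1, u2, u3, u4, u5, u6, u7]
  simp only [mul_add, add_mul, smul_mul_assoc, mul_smul_comm, smul_smul, mul_one, one_mul,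
    mul_neg, neg_mul, smul_neg, neg_neg, mul_assoc, e_sq, e_sq', e10, e20, e21, e30, e31, e32,
    e10', e20', e21', e30', e31', e32']
  module
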